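/- If there exist y ∈ X and an n×n real matrix Y such that X ∩ K(y, X) = ∅, then f has no zero in X, i.e., there is no x ∈ X with f(x) = 0. -/

import Mathlib

open MeasureTheory Set

attribute [local instance] Matrix.normedAddCommGroup Matrix.normedSpace

private lemma aux_isCompact_convexHull {E : Type*} [NormedAddCommGroup E] [NormedSpace ℝ E]
    [FiniteDimensional ℝ E] {s : Set E} (hs : IsCompact s) :
    IsCompact (convexHull ℝ s) := by
  classical
  rcases s.eq_empty_or_nonempty with rfl | ⟨e, he⟩
  · simp
  · set d : ℕ := Module.finrank ℝ E + 1 with hd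
    set g : ((Fin d → ℝ) × (Fin d → E)) → E := fun p => ∑ i, p.1 i • p.2 i with hg
    have hgc : Continuous g := by
      apply continuous_finset_sum
      intro i _
      exact ((continuous_apply i).comp continuous_fst).smul
        ((continuous_apply i).comp continuous_snd)
    have hK : IsCompact (stdSimplex ℝ (Fin d) ×ˢ Set.pi Set.univ fun _ : Fin d => s) :=
      (isCompact_stdSimplex ℝ _).prod (isCompact_univ_pi fun _ => hs)
    have heq : convexHull ℝ s
        = g '' (stdSimplex ℝ (Fin d) ×ˢ Set.pi Set.univ fun _ : Fin d => s) := by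
      apply Set.Subset.antisymm
      · intro x hx
        obtain ⟨ι, hι, z, w, hzs, hai, hwpos, hwsum, hwz⟩ :=
          eq_pos_convex_span_of_mem_convexHull hx
        have hcard : Fintype.card ι ≤ d := by
          have h1 := hai.card_le_finrank_succ
          have h2 := Submodule.finrank_le (vectorSpan ℝ (Set.range z))
          omega
        obtain ⟨φ⟩ : Nonempty (ι ↪ Fin d) := by
          apply Function.Embedding.nonempty_of_card_le
          simpa using hcard
        have hw' : ∀ i, Function.extend φ w (fun _ => (0:ℝ)) (φ i) = w i :=
          fun i => φ.injective.extend_apply _ _ _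
        have hz' : ∀ i, Function.extend φ z (fun _ => e) (φ i) = z i :=
          fun i => φ.injective.extend_apply _ _ _
        have hnotin : ∀ j : Fin d, j ∉ Finset.univ.map φ → ¬∃ i, φ i = j := by
          intro j hj ⟨i, hi⟩
          exact hj (Finset.mem_map.mpr ⟨i, Finset.mem_univ i, hi⟩)
        have hw'zero : ∀ j, j ∉ Finset.univ.map φ →
            Function.extend φ w (fun _ => (0:ℝ)) j = 0 := fun j hj =>
          Function.extend_apply' _ _ _ (hnotin j hj)
        have hw'nonneg : ∀ j, 0 ≤ Function.extend φ w (fun _ => (0:ℝ)) j := by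
          intro j
          rcases Decidable.em (j ∈ Finset.univ.map φ) with hj | hj
          · obtain ⟨i, _, rfl⟩ := Finset.mem_map.mp hj
            rw [hw']
            exact (hwpos i).le
          · rw [hw'zero j hj]
        have hw'sum : ∑ j, Function.extend φ w (fun _ => (0:ℝ)) j = 1 := by
          rw [← Finset.sum_subset (Finset.subset_univ (Finset.univ.map φ))
            (fun j _ hj => hw'zero j hj), Finset.sum_map]
          simpa [hw'] using hwsum
        have hz'mem : ∀ j, Function.extend φ z (fun _ => e) j ∈ s := by
          intro j
          rcases Decidable.em (j ∈ Finset.univ.map φ) with hj | hj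
          · obtain ⟨i, _, rfl⟩ := Finset.mem_map.mp hj
            rw [hz']
            exact hzs ⟨i, rfl⟩
          · rw [Function.extend_apply' _ _ _ (hnotin j hj)]
            exact he
        have hsum : ∑ j, Function.extend φ w (fun _ => (0:ℝ)) j •
            Function.extend φ z (fun _ => e) j = x := by
          rw [← Finset.sum_subset (Finset.subset_univ (Finset.univ.map φ))
            (fun j _ hj => by rw [hw'zero j hj, zero_smul]), Finset.sum_map]
          simp only [hw', hz']
          exact hwz
        exact ⟨(Function.extend φ w (fun _ => (0:ℝ)), Function.extend φ z (fun _ => e)),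
          ⟨⟨hw'nonneg, hw'sum⟩, fun j _ => hz'mem j⟩, hsum⟩
      · rintro _ ⟨⟨w, z⟩, ⟨⟨hw0, hw1⟩, hzmem⟩, rfl⟩
        exact (convex_convexHull ℝ s).sum_mem (fun i _ => hw0 i) hw1
          fun i _ => subset_convexHull ℝ s (hzmem i (Set.mem_univ i))
    rw [heq]
    exact hK.image hgc

/-- Krawczyk operator, Property 2: if `X ∩ K(y, X) = ∅` for some `y ∈ X` and some real
`n × n` matrix `Y`, then `f` has no zero in the box `X`. -/
theorem krawczyk_empty_intersection_no_root (n : ℕ) (hn : 1 ≤ n)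
    (D : Set (Fin n → ℝ)) (hD : IsOpen D)
    (f : (Fin n → ℝ) → (Fin n → ℝ))
    (J : (Fin n → ℝ) → Matrix (Fin n) (Fin n) ℝ)
    (hf : ∀ z ∈ D, HasFDerivAt f (LinearMap.toContinuousLinearMap (Matrix.mulVecLin (J z))) z)
    (hJc : ContinuousOn J D)
    (a b : Fin n → ℝ) (hab : a ≤ b)
    (X : Set (Fin n → ℝ)) (hX : X = Set.Icc a b) (hXD : X ⊆ D)
    (M : Set (Matrix (Fin n) (Fin n) ℝ)) (hM : Convex ℝ M)
    (hJM : ∀ z ∈ X, J z ∈ M)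
    (y : Fin n → ℝ) (hy : y ∈ X)
    (Y : Matrix (Fin n) (Fin n) ℝ)
    (hdisj : X ∩ { w | ∃ A ∈ M, ∃ x ∈ X,
      w = y - Y.mulVec (f y) + (1 - Y * A).mulVec (x - y) } = ∅) :
    ¬ ∃ x ∈ X, f x = 0 := by
  rintro ⟨x, hx, hfx⟩
  have hXconv : Convex ℝ X := hX ▸ convex_Icc a b
  set v : Fin n → ℝ := x - y with hv
  -- The linear map `A ↦ A.mulVec v` on matrices.
  let L0 : Matrix (Fin n) (Fin n) ℝ →ₗ[ℝ] (Fin n → ℝ) :=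
    { toFun := fun A => A.mulVec v
      map_add' := fun A B => Matrix.add_mulVec A B v
      map_smul' := fun c A => by simp [Matrix.smul_mulVec] }
  let L : Matrix (Fin n) (Fin n) ℝ →L[ℝ] (Fin n → ℝ) := LinearMap.toContinuousLinearMap L0
  let γ : ℝ → (Fin n → ℝ) := fun t => y + t • v
  have hγX : ∀ t ∈ Icc (0:ℝ) 1, γ t ∈ X := fun t ht =>
    hXconv.add_smul_sub_mem hy hx ht
  have hγD : ∀ t ∈ Icc (0:ℝ) 1, γ t ∈ D := fun t ht => hXD (hγX t ht)
  have hγc : Continuous γ := by fun_prop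
  have hJγ : ContinuousOn (fun t => J (γ t)) (Icc (0:ℝ) 1) :=
    hJc.comp hγc.continuousOn hγD
  have hderiv : ∀ t ∈ Icc (0:ℝ) 1, HasDerivAt (fun t => f (γ t)) (L (J (γ t))) t := by
    intro t ht
    have h1 : HasDerivAt γ v t := by
      have := ((hasDerivAt_id t).smul_const v).const_add y
      simpa [γ] using this
    have h2 := (hf (γ t) (hγD t ht)).comp_hasDerivAt t h1
    exact h2
  have hint : IntervalIntegrable (fun t => L (J (γ t))) volume 0 1 :=
    (L.continuous.comp_continuousOn hJγ).intervalIntegrable_of_Icc (by norm_num)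
  letI : ENormedAddMonoid (Matrix (Fin n) (Fin n) ℝ) := NormedAddGroup.toENormedAddMonoid
  have hJint : IntervalIntegrable (fun t => J (γ t)) volume 0 1 :=
    hJγ.intervalIntegrable_of_Icc (by norm_num)
  have key : f x - f y = ∫ t in (0:ℝ)..1, L (J (γ t)) := by
    have := intervalIntegral.integral_eq_sub_of_hasDerivAt
      (f := fun t => f (γ t)) (f' := fun t => L (J (γ t)))
      (by rw [Set.uIcc_of_le (by norm_num : (0:ℝ) ≤ 1)]; exact hderiv) hint
    rw [this]
    simp [γ, hv]
  set A : Matrix (Fin n) (Fin n) ℝ := ∫ t in (0:ℝ)..1, J (γ t) with hA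
  have hLA : L A = f x - f y := by
    rw [key]; exact (ContinuousLinearMap.intervalIntegral_comp_comm L hJint).symm
  have hAM : A ∈ M := by
    have hS : IsCompact ((fun t => J (γ t)) '' Icc (0:ℝ) 1) :=
      isCompact_Icc.image_of_continuousOn hJγ
    set s := convexHull ℝ ((fun t => J (γ t)) '' Icc (0:ℝ) 1) with hs
    have hsconv : Convex ℝ s := convex_convexHull _ _
    have hscomp : IsCompact s := aux_isCompact_convexHull hS
    have hsM : s ⊆ M :=
      convexHull_min (by rintro _ ⟨t, ht, rfl⟩; exact hJM _ (hγX t ht)) hM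
    have hmem : A ∈ s := by
      rw [hA, intervalIntegral.integral_of_le (by norm_num : (0:ℝ) ≤ 1)]
      have : IsProbabilityMeasure (volume.restrict (Ioc (0:ℝ) 1)) :=
        ⟨by simp⟩
      refine hsconv.integral_mem hscomp.isClosed ?_ ?_
      · refine (ae_restrict_mem measurableSet_Ioc).mono fun t ht => ?_
        exact subset_convexHull ℝ _ ⟨t, Ioc_subset_Icc_self ht, rfl⟩
      · exact hJint.1
    exact hsM hmem
  have hAv : A.mulVec v = f x - f y := hLA
  have hxK : x ∈ { w | ∃ A ∈ M, ∃ x' ∈ X,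
      w = y - Y.mulVec (f y) + (1 - Y * A).mulVec (x' - y) } := by
    refine ⟨A, hAM, x, hx, ?_⟩
    rw [Matrix.sub_mulVec, Matrix.one_mulVec, ← Matrix.mulVec_mulVec, ← hv, hAv, hfx,
      Matrix.mulVec_sub, Matrix.mulVec_zero]
    simp [hv]
  exact Set.eq_empty_iff_forall_notMem.mp hdisj x ⟨hx, hxK⟩
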